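/- Let S be a positive definite symmetric n×n real matrix, S₀ = [[0,0,1],[0,-S,0],[1,0,0]]. If λ = (λ₁,...,λ_{n+2}) ∈ ℝ^{n+2} satisfies λ₁ ≥ 0, λ_{n+2} ≥ 0 and S₀[λ] ≥ 0 (i.e. λ ≥ 0 in the sense of the Fourier expansion cone), and y ∈ ℝ^{n+2} is a nonzero isotropic vector with yᵀS₀λ = 0, then S₀[λ] = 0. -/

import Mathlib

open Matrix

abbrev Idx (n : ℕ) := Fin 1 ⊕ Fin n ⊕ Fin 1

/-- The matrix `S₀ = [[0,0,1],[0,-S,0],[1,0,0]]`. -/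
def S0Mat (n : ℕ) (S : Matrix (Fin n) (Fin n) ℝ) : Matrix (Idx n) (Idx n) ℝ :=
  fun i j =>
    match i, j with
    | Sum.inl _, Sum.inr (Sum.inr _) => 1
    | Sum.inr (Sum.inr _), Sum.inl _ => 1
    | Sum.inr (Sum.inl a), Sum.inr (Sum.inl b) => -S a b
    | _, _ => 0

lemma bilin (n : ℕ) (S : Matrix (Fin n) (Fin n) ℝ) (x z : Idx n → ℝ) :
    x ⬝ᵥ (S0Mat n S).mulVec z =
      x (Sum.inl 0) * z (Sum.inr (Sum.inr 0)) + x (Sum.inr (Sum.inr 0)) * z (Sum.inl 0)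
      - (fun i => x (Sum.inr (Sum.inl i))) ⬝ᵥ S.mulVec (fun i => z (Sum.inr (Sum.inl i))) := by
  simp [dotProduct, mulVec, S0Mat, Fintype.sum_sum_type, Fin.sum_univ_one, Finset.mul_sum,
    mul_neg, neg_mul, Finset.sum_neg_distrib]
  ring

/-- If `λ ≥ 0` (i.e. `λ₁ ≥ 0`, `λ_{n+2} ≥ 0`, `S₀[λ] ≥ 0`) and `λ` is orthogonal to a
nonzero isotropic vector `y`, then `S₀[λ] = 0`. -/
theorem stmt_1 (n : ℕ) (S : Matrix (Fin n) (Fin n) ℝ) (hsym : S.IsSymm) (hpos : S.PosDef)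
    (lam : Idx n → ℝ)
    (h1 : 0 ≤ lam (Sum.inl 0)) (h2 : 0 ≤ lam (Sum.inr (Sum.inr 0)))
    (h3 : 0 ≤ lam ⬝ᵥ (S0Mat n S).mulVec lam)
    (y : Idx n → ℝ) (hy : y ≠ 0) (hyiso : y ⬝ᵥ (S0Mat n S).mulVec y = 0)
    (horth : y ⬝ᵥ (S0Mat n S).mulVec lam = 0) :
    lam ⬝ᵥ (S0Mat n S).mulVec lam = 0 := by
  by_contra hne
  rw [bilin] at h3 hyiso horth hne
  set a := lam (Sum.inl 0) with ha
  set b := lam (Sum.inr (Sum.inr 0)) with hb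
  set v : Fin n → ℝ := fun i => lam (Sum.inr (Sum.inl i)) with hv
  set c := y (Sum.inl 0) with hc
  set d := y (Sum.inr (Sum.inr 0)) with hd
  set w : Fin n → ℝ := fun i => y (Sum.inr (Sum.inl i)) with hw
  set P := v ⬝ᵥ S.mulVec v with hP
  set R := w ⬝ᵥ S.mulVec w with hR
  set M := w ⬝ᵥ S.mulVec v with hM
  have hMsym : v ⬝ᵥ S.mulVec w = M := by
    have hvm : v ᵥ* S = S *ᵥ v := by
      conv_lhs => rw [← hsym.eq]
      rw [vecMul_transpose]
    calc v ⬝ᵥ S *ᵥ w = (v ᵥ* S) ⬝ᵥ w := dotProduct_mulVec _ _ _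
      _ = (S *ᵥ v) ⬝ᵥ w := by rw [hvm]
      _ = w ⬝ᵥ (S *ᵥ v) := dotProduct_comm _ _
  have hQ : 0 < a * b + b * a - P := lt_of_le_of_ne h3 (Ne.symm hne)
  have hPnn : 0 ≤ P := by have := hpos.posSemidef.dotProduct_mulVec_nonneg v; simpa [hP] using this
  have hb0 : 0 < b := by
    rcases lt_or_eq_of_le h2 with h | h
    · exact h
    · exfalso; nlinarith
  have ha0 : 0 < a := by nlinarith
  set t := d / b with ht
  have hexp : (w - t • v) ⬝ᵥ S.mulVec (w - t • v) = R - 2 * t * M + t ^ 2 * P := by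
    simp only [mulVec_sub, dotProduct_sub, sub_dotProduct, mulVec_smul, dotProduct_smul,
      smul_dotProduct, smul_eq_mul, hMsym]
    ring
  have hnn : 0 ≤ R - 2 * t * M + t ^ 2 * P := by
    rw [← hexp]; have := hpos.posSemidef.dotProduct_mulVec_nonneg (w - t • v); simpa using this
  have hbne : b ≠ 0 := ne_of_gt hb0
  have key : R - 2 * t * M + t ^ 2 * P = -(d / b) ^ 2 * (a * b + b * a - P) := by
    have hR2 : R = c * d + d * c := by linarith
    have hM2 : M = c * b + d * a := by linarith
    rw [hR2, hM2, ht]; field_simp; ring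
  have hd0 : d = 0 := by
    by_contra hdne
    have : (d / b) ^ 2 > 0 := by positivity
    nlinarith
  have hR0 : R = 0 := by rw [hd0] at hyiso; linarith
  have hw0 : w = 0 := by
    by_contra hwne
    have := hpos.dotProduct_mulVec_pos hwne
    simp only [star_trivial] at this
    rw [← hR] at this; linarith
  have hM0 : M = 0 := by rw [hM, hw0]; simp
  have hc0 : c = 0 := by
    rw [hd0, hM0] at horth
    have : c * b = 0 := by linarith
    rcases mul_eq_zero.mp this with h | h
    · exact h
    · exact absurd h hbne
  apply hy
  funext i
  rcases i with i | i | i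
  · have : i = 0 := Subsingleton.elim _ _
    rw [this]; exact hc0
  · exact congrFun hw0 i
  · have : i = 0 := Subsingleton.elim _ _
    rw [this]; exact hd0
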